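/- arXiv:1312.6394 — 3 statements merged into one kernel-verified Lean document; each statement's English description precedes it below -/
import Mathlib

section
/- Let $S \subset \mathbb{N}^d$ be a smoothness (a finite set containing $0$ and closed under coordinatewise domination: if $\alpha \in S$ and $\beta(j) \le \alpha(j)$ for all $j$ then $\beta \in S$). Suppose $S$ has Property (O): there exist $\alpha, \beta \in S$ with $|\alpha| \not\equiv |\beta| \pmod 2$ and a vector $c \in \mathbb{R}^d$ with all coordinates positive such that $\langle \alpha, c \rangle = \langle \beta, c \rangle = 1$ and $\langle \gamma, c \rangle \le 1$ for all $\gamma \in S$. Then there exists a sequence $(n_k) \subset \mathbb{N}^d$ with $\lim_k \min_{1\le j \le d} n_k(j) = \infty$ and $\inf_k \min\{|\sigma_\alpha(n_k)|, |\sigma_\beta(n_k)|\} \cdot Q_S(n_k)^{-1/2} > 0$. -/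
open Finset

/-- The symbol `σ_γ(n) = ∏_j (i n(j))^{γ(j)}` if all coordinates of `n` are
nonzero, and `0` otherwise. -/
noncomputable def sigmaSym (d : ℕ) (γ : Fin d → ℕ) (n : Fin d → ℤ) : ℂ :=
  if ∀ j, n j ≠ 0 then ∏ j : Fin d, (Complex.I * (n j : ℂ)) ^ γ j else 0

/-- The fundamental polynomial `Q_S(n) = ∑_{γ ∈ S} |σ_γ(n)|²`. -/
noncomputable def QS (d : ℕ) (S : Finset (Fin d → ℕ)) (n : Fin d → ℤ) : ℝ :=
  ∑ γ ∈ S, ‖sigmaSym d γ n‖ ^ 2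

lemma abs_sigma_eq (d : ℕ) (γ : Fin d → ℕ) (m : Fin d → ℕ) (hm : ∀ j, 1 ≤ m j) :
    ‖sigmaSym d γ (fun j => (m j : ℤ))‖ = ∏ j, (m j : ℝ) ^ γ j := by
  rw [sigmaSym, if_pos]
  · rw [norm_prod]
    refine Finset.prod_congr rfl fun j _ => ?_
    rw [norm_pow, norm_mul, Complex.norm_I, one_mul]
    norm_num
  · intro j
    have h := hm j
    omega

theorem stmt_9 (d : ℕ) (S : Finset (Fin d → ℕ)) (h0 : (0 : Fin d → ℕ) ∈ S)
    (hclosed : ∀ α ∈ S, ∀ β : Fin d → ℕ, (∀ j, β j ≤ α j) → β ∈ S)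
    (α β : Fin d → ℕ) (hα : α ∈ S) (hβ : β ∈ S)
    (hpar : (∑ j : Fin d, α j) % 2 ≠ (∑ j : Fin d, β j) % 2)
    (c : Fin d → ℝ) (hc : ∀ j, 0 < c j)
    (hαc : ∑ j : Fin d, (α j : ℝ) * c j = 1)
    (hβc : ∑ j : Fin d, (β j : ℝ) * c j = 1)
    (hγc : ∀ γ ∈ S, ∑ j : Fin d, (γ j : ℝ) * c j ≤ 1) :
    ∃ n : ℕ → Fin d → ℕ,
      (∀ M : ℕ, ∃ K : ℕ, ∀ k ≥ K, ∀ j : Fin d, M ≤ n k j) ∧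
      ∃ ρ > (0 : ℝ), ∀ k : ℕ,
        ρ ≤ min (‖sigmaSym d α fun j => (n k j : ℤ)‖)
              (‖sigmaSym d β fun j => (n k j : ℤ)‖) /
            Real.sqrt (QS d S fun j => (n k j : ℤ)) := by
  classical
  set n : ℕ → Fin d → ℕ := fun k j => ⌈((k : ℝ) + 1) ^ (c j)⌉₊ with hn
  -- basic facts about n
  have hN1 : ∀ k : ℕ, (1 : ℝ) ≤ (k : ℝ) + 1 := by
    intro k; have : (0:ℝ) ≤ (k:ℝ) := Nat.cast_nonneg k; linarith
  have hrp1 : ∀ (k : ℕ) (j : Fin d), (1 : ℝ) ≤ ((k : ℝ) + 1) ^ (c j) := by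
    intro k j
    exact Real.one_le_rpow (hN1 k) (hc j).le
  have hnpos : ∀ k (j : Fin d), 1 ≤ n k j := by
    intro k j
    rw [hn]
    exact Nat.one_le_ceil_iff.2 (lt_of_lt_of_le one_pos (hrp1 k j))
  have hlow : ∀ (k : ℕ) (j : Fin d), ((k : ℝ) + 1) ^ (c j) ≤ (n k j : ℝ) := by
    intro k j; exact Nat.le_ceil _
  have hupp : ∀ k (j : Fin d), (n k j : ℝ) ≤ 2 * ((k : ℝ) + 1) ^ (c j) := by
    intro k j
    have h1 := (Nat.ceil_lt_add_one (le_trans zero_le_one (hrp1 k j))).le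
    have := hrp1 k j
    rw [hn]
    nlinarith [h1]
  refine ⟨n, ?_, ?_⟩
  · -- divergence
    intro M
    have h : ∀ᶠ k : ℕ in Filter.atTop, ∀ j : Fin d, M ≤ n k j := by
      rw [Filter.eventually_all]
      intro j
      have h1 : Filter.Tendsto (fun k : ℕ => ((k : ℝ) + 1) ^ (c j)) Filter.atTop
          Filter.atTop := by
        apply (tendsto_rpow_atTop (hc j)).comp
        exact Filter.tendsto_atTop_add_const_right _ 1 tendsto_natCast_atTop_atTop
      filter_upwards [h1.eventually_ge_atTop (M : ℝ)] with k hk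
      show M ≤ ⌈((k : ℝ) + 1) ^ (c j)⌉₊
      have := hk.trans (Nat.le_ceil _)
      exact_mod_cast this
    obtain ⟨K, hK⟩ := Filter.eventually_atTop.mp h
    exact ⟨K, fun k hk => hK k hk⟩
  · -- the bound
    set C : ℝ := ∑ γ ∈ S, (4 : ℝ) ^ (∑ j, γ j) with hC
    have hC1 : (1 : ℝ) ≤ C := by
      rw [hC]
      have : ((4:ℝ) ^ (∑ j, (0 : Fin d → ℕ) j)) = 1 := by simp
      calc (1:ℝ) = (4:ℝ) ^ (∑ j, (0 : Fin d → ℕ) j) := this.symm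
        _ ≤ C := Finset.single_le_sum (f := fun γ => (4:ℝ) ^ (∑ j, γ j))
            (fun γ _ => by positivity) h0
    have hCpos : (0:ℝ) < C := lt_of_lt_of_le one_pos hC1
    refine ⟨1 / Real.sqrt C, by positivity, ?_⟩
    intro k
    set N : ℝ := (k : ℝ) + 1 with hNdef
    have hNpos : 0 < N := lt_of_lt_of_le one_pos (hN1 k)
    -- lower bound on |σ_γ| for γ with ⟨γ,c⟩ = 1
    have key_low : ∀ γ : Fin d → ℕ, (∑ j, (γ j : ℝ) * c j) = 1 →
        N ≤ ‖sigmaSym d γ fun j => ((n k j : ℤ))‖ := by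
      intro γ hγ
      rw [abs_sigma_eq d γ (n k) (hnpos k)]
      have : N = ∏ j, (N ^ (c j)) ^ (γ j) := by
        have : ∀ j : Fin d, (N ^ (c j)) ^ (γ j) = N ^ ((γ j : ℝ) * c j) := by
          intro j
          rw [← Real.rpow_natCast (N ^ (c j)) (γ j), ← Real.rpow_mul hNpos.le,
            mul_comm]
        rw [Finset.prod_congr rfl fun j _ => this j, ← Real.rpow_sum_of_pos hNpos,
          hγ, Real.rpow_one]
      rw [this]
      apply Finset.prod_le_prod
      · intro j _; positivity
      · intro j _
        exact pow_le_pow_left₀ (by positivity) (hlow k j) _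
    -- upper bound on Q_S
    have key_upp : QS d S (fun j => ((n k j : ℤ))) ≤ C * N ^ 2 := by
      rw [QS, hC, Finset.sum_mul]
      apply Finset.sum_le_sum
      intro γ hγ
      rw [abs_sigma_eq d γ (n k) (hnpos k)]
      have h1 : ∏ j, (n k j : ℝ) ^ (γ j) ≤ (2:ℝ) ^ (∑ j, γ j) * N := by
        have h2 : ∏ j, (n k j : ℝ) ^ (γ j) ≤ ∏ j, (2 * N ^ (c j)) ^ (γ j) := by
          apply Finset.prod_le_prod
          · intro j _; positivity
          · intro j _; exact pow_le_pow_left₀ (by positivity) (hupp k j) _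
        have h3 : ∏ j, ((2:ℝ) * N ^ (c j)) ^ (γ j)
            = (2:ℝ) ^ (∑ j, γ j) * N ^ (∑ j, (γ j : ℝ) * c j) := by
          calc ∏ j, ((2:ℝ) * N ^ (c j)) ^ (γ j)
              = ∏ j, ((2:ℝ) ^ (γ j) * N ^ ((γ j : ℝ) * c j)) := by
                refine Finset.prod_congr rfl fun j _ => ?_
                rw [mul_pow, ← Real.rpow_natCast (N ^ (c j)) (γ j),
                  ← Real.rpow_mul hNpos.le, mul_comm (c j)]
            _ = (2:ℝ) ^ (∑ j, γ j) * N ^ (∑ j, (γ j : ℝ) * c j) := by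
                rw [Finset.prod_mul_distrib, Finset.prod_pow_eq_pow_sum,
                  ← Real.rpow_sum_of_pos hNpos]
        have h4 : N ^ (∑ j, (γ j : ℝ) * c j) ≤ N := by
          calc N ^ (∑ j, (γ j : ℝ) * c j) ≤ N ^ (1:ℝ) :=
            Real.rpow_le_rpow_of_exponent_le (hN1 k) (hγc γ hγ)
          _ = N := Real.rpow_one N
        calc ∏ j, (n k j : ℝ) ^ (γ j) ≤ (2:ℝ) ^ (∑ j, γ j) * N ^ (∑ j, (γ j : ℝ) * c j) := by
              rw [← h3]; exact h2
          _ ≤ (2:ℝ) ^ (∑ j, γ j) * N := by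
              apply mul_le_mul_of_nonneg_left h4 (by positivity)
      have hnn : (0:ℝ) ≤ ∏ j, (n k j : ℝ) ^ (γ j) := by positivity
      calc (∏ j, (n k j : ℝ) ^ (γ j)) ^ 2 ≤ ((2:ℝ) ^ (∑ j, γ j) * N) ^ 2 :=
            pow_le_pow_left₀ hnn h1 2
        _ = (4:ℝ) ^ (∑ j, γ j) * N ^ 2 := by
            rw [mul_pow, ← pow_mul, show (4:ℝ) = 2^2 by norm_num, ← pow_mul,
              Nat.mul_comm]
    -- combine
    have hQpos : 0 < Real.sqrt (QS d S (fun j => ((n k j : ℤ)))) := by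
      apply Real.sqrt_pos.2
      have h1 : (1:ℝ) ≤ QS d S (fun j => ((n k j : ℤ))) := by
        rw [QS]
        have : ‖sigmaSym d 0 (fun j => ((n k j : ℤ)))‖ ^ 2 = 1 := by
          rw [abs_sigma_eq d 0 (n k) (hnpos k)]; simp
        calc (1:ℝ) = ‖sigmaSym d 0 (fun j => ((n k j : ℤ)))‖ ^ 2 := this.symm
          _ ≤ _ := Finset.single_le_sum (f := fun γ => ‖sigmaSym d γ _‖ ^ 2)
              (fun γ _ => by positivity) h0
      linarith
    have hsq : Real.sqrt (QS d S (fun j => ((n k j : ℤ)))) ≤ Real.sqrt C * N := by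
      rw [show Real.sqrt C * N = Real.sqrt (C * N ^ 2) by
        rw [Real.sqrt_mul hCpos.le, Real.sqrt_sq hNpos.le]]
      exact Real.sqrt_le_sqrt key_upp
    have hmin : N ≤ min (‖sigmaSym d α fun j => ((n k j : ℤ))‖)
        (‖sigmaSym d β fun j => ((n k j : ℤ))‖) :=
      le_min (key_low α hαc) (key_low β hβc)
    calc 1 / Real.sqrt C = N / (Real.sqrt C * N) := by
          rw [div_eq_div_iff (by positivity) (by positivity)]; ring
      _ ≤ _ := by
          apply div_le_div₀ (le_trans hNpos.le hmin) hmin hQpos hsq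
end

section
/- Let $S \subset \mathbb{N}^d$ be a smoothness with Property (O) witnessed by $\alpha, \beta \in S$ and $c \in (0,\infty)^d$ with $\langle\alpha,c\rangle = \langle\beta,c\rangle = 1$ and $\langle\gamma,c\rangle \le 1$ for all $\gamma \in S$. Define $n_k \in \mathbb{N}^d$ by $n_k(j) = \lceil e^{k\, c(j)} \rceil$ (or any sequence with $n_k(j) \sim e^{k c(j)}$). Then $\liminf_{k\to\infty} |\sigma_\alpha(n_k)|^2 / Q_S(n_k) > 0$. -/
open Finset

theorem stmt_10 (d : ℕ) (S : Finset (Fin d → ℕ)) (h0 : (0 : Fin d → ℕ) ∈ S)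
    (hclosed : ∀ α ∈ S, ∀ β : Fin d → ℕ, (∀ j, β j ≤ α j) → β ∈ S)
    (α β : Fin d → ℕ) (hα : α ∈ S) (hβ : β ∈ S)
    (hpar : (∑ j : Fin d, α j) % 2 ≠ (∑ j : Fin d, β j) % 2)
    (c : Fin d → ℝ) (hc : ∀ j, 0 < c j)
    (hαc : ∑ j : Fin d, (α j : ℝ) * c j = 1)
    (hβc : ∑ j : Fin d, (β j : ℝ) * c j = 1)
    (hγc : ∀ γ ∈ S, ∑ j : Fin d, (γ j : ℝ) * c j ≤ 1)
    (n : ℕ → Fin d → ℕ) (hn : ∀ k j, n k j = ⌈Real.exp (k * c j)⌉₊) :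
    0 < Filter.liminf (fun k : ℕ =>
        ‖sigmaSym d α fun j => (n k j : ℤ)‖ ^ 2 /
          QS d S (fun j => (n k j : ℤ))) Filter.atTop := by
  classical
  set C : ℝ := ∑ γ ∈ S, (4 : ℝ) ^ (∑ j, γ j) with hCdef
  have hCpos : 0 < C :=
    Finset.sum_pos (fun γ _ => by positivity) ⟨0, h0⟩
  -- pointwise facts
  have key : ∀ k : ℕ, 1 / C ≤
      ‖sigmaSym d α fun j => (n k j : ℤ)‖ ^ 2 /
        QS d S (fun j => (n k j : ℤ)) := by
    intro k
    have hexp1 : ∀ j, (1 : ℝ) ≤ Real.exp (k * c j) := fun j =>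
      Real.one_le_exp (mul_nonneg (Nat.cast_nonneg k) (hc j).le)
    have hlow : ∀ j, Real.exp (k * c j) ≤ (n k j : ℝ) := fun j => by
      rw [hn k j]; exact Nat.le_ceil _
    have hup : ∀ j, (n k j : ℝ) ≤ 2 * Real.exp (k * c j) := fun j => by
      rw [hn k j]
      have := (Nat.ceil_lt_add_one (le_of_lt (Real.exp_pos (k * c j)))).le
      linarith [hexp1 j]
    have hpos : ∀ j, (0 : ℝ) < (n k j : ℝ) := fun j =>
      lt_of_lt_of_le (lt_of_lt_of_le one_pos (hexp1 j)) (hlow j)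
    have hne : ∀ j, ((n k j : ℤ)) ≠ 0 := fun j => by
      have := hpos j; exact_mod_cast this.ne'
    -- compute |σ_γ|²
    have habs : ∀ γ : Fin d → ℕ,
        ‖sigmaSym d γ fun j => (n k j : ℤ)‖ ^ 2
          = ∏ j, ((n k j : ℝ)) ^ (2 * γ j) := by
      intro γ
      rw [sigmaSym, if_pos hne, norm_prod]
      rw [← Finset.prod_pow]
      refine Finset.prod_congr rfl fun j _ => ?_
      rw [norm_pow, norm_mul, Complex.norm_I, one_mul]
      push_cast
      rw [Complex.norm_natCast, ← pow_mul, mul_comm (γ j) 2]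
    -- exponential products
    have hprodexp : ∀ γ : Fin d → ℕ,
        ∏ j, Real.exp (k * c j) ^ (2 * γ j)
          = Real.exp (2 * k * ∑ j, (γ j : ℝ) * c j) := by
      intro γ
      rw [Finset.mul_sum, Real.exp_sum]
      refine Finset.prod_congr rfl fun j _ => ?_
      rw [← Real.exp_nat_mul]
      congr 1
      push_cast
      ring
    -- lower bound for α-term
    have hA : Real.exp (2 * k) ≤
        ‖sigmaSym d α fun j => (n k j : ℤ)‖ ^ 2 := by
      rw [habs α]
      calc Real.exp (2 * k) = ∏ j, Real.exp (k * c j) ^ (2 * α j) := by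
            rw [hprodexp α, hαc, mul_one]
        _ ≤ ∏ j, ((n k j : ℝ)) ^ (2 * α j) :=
            Finset.prod_le_prod (fun j _ => by positivity)
              (fun j _ => pow_le_pow_left₀ (Real.exp_pos _).le (hlow j) _)
    -- upper bound for Q
    have hQle : QS d S (fun j => (n k j : ℤ)) ≤ C * Real.exp (2 * k) := by
      rw [QS, hCdef, Finset.sum_mul]
      refine Finset.sum_le_sum fun γ hγ => ?_
      rw [habs γ]
      calc ∏ j, ((n k j : ℝ)) ^ (2 * γ j)
          ≤ ∏ j, (2 * Real.exp (k * c j)) ^ (2 * γ j) :=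
            Finset.prod_le_prod (fun j _ => by positivity)
              (fun j _ => pow_le_pow_left₀ (hpos j).le (hup j) _)
        _ = (∏ j, (2:ℝ) ^ (2 * γ j)) * ∏ j, Real.exp (k * c j) ^ (2 * γ j) := by
            rw [← Finset.prod_mul_distrib]
            exact Finset.prod_congr rfl fun j _ => (mul_pow _ _ _)
        _ ≤ (4 : ℝ) ^ (∑ j, γ j) * Real.exp (2 * k) := by
            have h1 : (∏ j, (2:ℝ) ^ (2 * γ j)) = (4 : ℝ) ^ (∑ j, γ j) := by
              rw [← Finset.prod_pow_eq_pow_sum]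
              refine Finset.prod_congr rfl fun j _ => ?_
              rw [pow_mul]; norm_num
            rw [h1, hprodexp γ]
            have := hγc γ hγ
            have h2 : 2 * (k:ℝ) * ∑ j, (γ j : ℝ) * c j ≤ 2 * k := by
              nlinarith [(Nat.cast_nonneg k : (0:ℝ) ≤ k)]
            exact mul_le_mul_of_nonneg_left (Real.exp_le_exp.mpr h2) (by positivity)
    have hQpos : 0 < QS d S (fun j => (n k j : ℤ)) := by
      have h0term : (0:ℝ) < ‖sigmaSym d 0 fun j => (n k j : ℤ)‖ ^ 2 := by
        rw [habs 0]
        exact Finset.prod_pos fun j _ => pow_pos (hpos j) _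
      exact Finset.sum_pos' (fun γ _ => by positivity) ⟨0, h0, h0term⟩
    have := div_le_div₀ (le_trans (Real.exp_pos _).le hA) hA hQpos hQle
    calc (1:ℝ)/C = Real.exp (2*k) / (C * Real.exp (2*k)) := by
          field_simp
      _ ≤ _ := this
  refine lt_of_lt_of_le (by positivity) (Filter.le_liminf_of_le ?_
    (Filter.Eventually.of_forall key))
  refine Filter.isCoboundedUnder_ge_of_le Filter.atTop (x := 1) fun k => ?_
  by_cases hQ : QS d S (fun j => (n k j : ℤ)) = 0
  · simp [hQ]
  · have hQpos : 0 < QS d S (fun j => (n k j : ℤ)) := by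
      have : 0 ≤ QS d S (fun j => (n k j : ℤ)) :=
        Finset.sum_nonneg fun γ _ => by positivity
      exact lt_of_le_of_ne this (Ne.symm hQ)
    rw [div_le_one hQpos, QS]
    exact Finset.single_le_sum (f := fun γ => ‖sigmaSym d γ fun j => ((n k j : ℤ))‖ ^ 2) (fun γ _ => by positivity) hα
end

section
/- Let $S \subset \mathbb{N}^d$ be a finite set containing $0$. Given $\varepsilon \in (0,1)$ and a positive integer $D$, there exists $\rho > 1$ such that for every $m, n \in \mathbb{Z}^d$, if $\min_{1\le j\le d}|n(j)| \ge \rho$ and $\sum_{j=1}^d |n(j)-m(j)| \le D$, then $\sum_{\gamma \in S} \left| \frac{\sigma_\gamma(m)}{Q_S(m)^{1/2}} - \frac{\sigma_\gamma(n)}{Q_S(n)^{1/2}} \right|^2 < \varepsilon^2$. -/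
open Finset

lemma abs_sigmaSym (d : ℕ) (γ : Fin d → ℕ) (x : Fin d → ℤ) (hx : ∀ j, x j ≠ 0) :
    ‖sigmaSym d γ x‖ = ∏ j, (|x j| : ℝ) ^ γ j := by
  rw [sigmaSym, if_pos hx, norm_prod]
  refine Finset.prod_congr rfl fun j _ => ?_
  rw [norm_pow, norm_mul, Complex.norm_I, one_mul, Complex.norm_intCast]

lemma sigma_ratio (d : ℕ) (γ : Fin d → ℕ) (m n : Fin d → ℤ)
    (hm : ∀ j, m j ≠ 0) (hn : ∀ j, n j ≠ 0)
    (hsign : ∀ j, m j * |n j| = |m j| * n j) :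
    sigmaSym d γ m = ((∏ j, ((|m j| : ℝ) / (|n j| : ℝ)) ^ γ j : ℝ) : ℂ) * sigmaSym d γ n := by
  rw [sigmaSym, sigmaSym, if_pos hm, if_pos hn]
  rw [Complex.ofReal_prod, ← Finset.prod_mul_distrib]
  refine Finset.prod_congr rfl fun j _ => ?_
  rw [Complex.ofReal_pow, ← mul_pow]
  congr 1
  have hnj : ((|n j| : ℤ) : ℂ) ≠ 0 := by exact_mod_cast abs_ne_zero.mpr (hn j)
  have h : ((m j : ℂ)) * ((|n j| : ℤ) : ℂ) = ((|m j| : ℤ) : ℂ) * (n j : ℂ) := by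
    exact_mod_cast hsign j
  have hc : (((|m j| : ℝ) / (|n j| : ℝ) : ℝ) : ℂ) = ((|m j| : ℤ) : ℂ) / ((|n j| : ℤ) : ℂ) := by
    norm_cast
  rw [hc]
  field_simp
  linear_combination h

set_option maxHeartbeats 1000000 in
theorem stmt_12 (d : ℕ) (S : Finset (Fin d → ℕ)) (h0 : (0 : Fin d → ℕ) ∈ S)
    (ε : ℝ) (hε : 0 < ε) (hε1 : ε < 1) (D : ℕ) (hD : 0 < D) :
    ∃ ρ : ℝ, 1 < ρ ∧ ∀ m n : Fin d → ℤ,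
      (∀ j : Fin d, ρ ≤ (|n j| : ℝ)) →
      (∑ j : Fin d, |n j - m j| ≤ (D : ℤ)) →
      ∑ γ ∈ S, ‖sigmaSym d γ m / (Real.sqrt (QS d S m) : ℂ) -
          sigmaSym d γ n / (Real.sqrt (QS d S n) : ℂ)‖ ^ 2 < ε ^ 2 := by
  classical
  set K := S.sup (fun γ => ∑ j, γ j) with hK
  set e := ε / 2 with he
  have he0 : 0 < e := by positivity
  have he1 : e < 1 := by rw [he]; linarith
  have h1e : (0:ℝ) < 1 + e := by linarith
  set c0 := (1 + e) ^ (((K : ℝ) + 1)⁻¹) with hc0def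
  have hc0 : 1 < c0 := by
    refine (Real.one_lt_rpow_iff_of_pos h1e).mpr (Or.inl ⟨by linarith, by positivity⟩)
  have hc0pow : c0 ^ (K + 1) = 1 + e := by
    rw [hc0def, ← Real.rpow_natCast ((1+e) ^ (((K : ℝ) + 1)⁻¹)) (K+1),
      ← Real.rpow_mul (le_of_lt h1e)]
    rw [show (((K:ℝ)+1)⁻¹ * ((K+1 : ℕ) : ℝ)) = 1 by push_cast; field_simp]
    exact Real.rpow_one _
  set δ := (c0 - 1) / (c0 + 1) with hδdef
  have hδ0 : 0 < δ := by apply div_pos <;> linarith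
  have hδ1 : δ < 1 := by rw [div_lt_one (by linarith)]; linarith
  have h1δ : 1 + δ = c0 * (1 - δ) := by
    rw [hδdef]; field_simp; ring
  have hD1 : (1:ℝ) ≤ (D:ℝ) := by exact_mod_cast hD
  refine ⟨((D:ℝ) + 1) / δ, ?_, ?_⟩
  · rw [lt_div_iff₀ hδ0]; nlinarith
  intro m n hn hmn
  -- coordinatewise bounds
  have hd : ∀ j, |n j - m j| ≤ (D:ℤ) := fun j =>
    le_trans (Finset.single_le_sum (fun i _ => abs_nonneg (n i - m i)) (mem_univ j)) hmn
  have hnabs : ∀ j, (D:ℝ) + 1 ≤ |(n j : ℝ)| := by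
    intro j
    refine le_trans ?_ (hn j)
    rw [le_div_iff₀ hδ0]; nlinarith
  have hn0 : ∀ j, (0:ℝ) < |(n j : ℝ)| := fun j => lt_of_lt_of_le (by linarith) (hnabs j)
  have hnne : ∀ j, n j ≠ 0 := by
    intro j hj
    have := hn0 j; rw [hj] at this; simp at this
  have hDδn : ∀ j, (D:ℝ) < δ * |(n j : ℝ)| := by
    intro j
    have h1 : δ * (((D:ℝ) + 1) / δ) ≤ δ * |(n j : ℝ)| :=
      mul_le_mul_of_nonneg_left (hn j) hδ0.le
    rw [mul_div_cancel₀ _ (ne_of_gt hδ0)] at h1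
    linarith
  have hdist : ∀ j, |(m j : ℝ) - (n j : ℝ)| ≤ (D:ℝ) := by
    intro j
    have h2 : ((|n j - m j| : ℤ) : ℝ) ≤ (D:ℝ) := by exact_mod_cast hd j
    rw [Int.cast_abs, Int.cast_sub] at h2
    rw [abs_sub_comm]
    exact h2
  have hub : ∀ j, |(m j : ℝ)| ≤ (1 + δ) * |(n j : ℝ)| := by
    intro j
    have h1 := abs_sub_abs_le_abs_sub (m j : ℝ) (n j : ℝ)
    have := hdist j; have := hDδn j
    nlinarith
  have hlb : ∀ j, (1 - δ) * |(n j : ℝ)| ≤ |(m j : ℝ)| := by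
    intro j
    have h1 := abs_sub_abs_le_abs_sub (n j : ℝ) (m j : ℝ)
    rw [abs_sub_comm] at h1
    have := hdist j; have := hDδn j
    nlinarith
  have hm0 : ∀ j, (0:ℝ) < |(m j : ℝ)| := by
    intro j
    have := hlb j; have := hn0 j
    nlinarith
  have hmne : ∀ j, m j ≠ 0 := by
    intro j hj
    have := hm0 j; rw [hj] at this; simp at this
  have hsign : ∀ j, m j * |n j| = |m j| * n j := by
    intro j
    have hdj := abs_le.mp (hd j)
    have hDn : (D:ℤ) < |n j| := by
      have := hnabs j
      have h2 : ((D:ℤ):ℝ) + 1 ≤ ((|n j| : ℤ) : ℝ) := by push_cast; push_cast at this; linarith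
      have : (D:ℤ) + 1 ≤ |n j| := by exact_mod_cast h2
      linarith
    rcases lt_or_ge 0 (n j) with hpos | hneg
    · have hnj : |n j| = n j := abs_of_pos hpos
      have hmj : 0 < m j := by rw [hnj] at hDn; linarith
      rw [hnj, abs_of_pos hmj]
    · have hneg' : n j < 0 := lt_of_le_of_ne hneg (hnne j)
      have hnj : |n j| = -n j := abs_of_neg hneg'
      have hmj : m j < 0 := by rw [hnj] at hDn; linarith
      rw [hnj, abs_of_neg hmj]; ring
  -- abstract quantities
  set r : (Fin d → ℕ) → ℝ := fun γ => ∏ j, ((|m j| : ℝ) / (|n j| : ℝ)) ^ γ j with hr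
  set A : (Fin d → ℕ) → ℝ := fun γ => ∏ j, (|n j| : ℝ) ^ γ j with hA
  have hApos : ∀ γ, 0 < A γ := fun γ => Finset.prod_pos fun j _ => pow_pos (hn0 j) _
  have hrpos : ∀ γ, 0 < r γ := fun γ =>
    Finset.prod_pos fun j _ => pow_pos (div_pos (hm0 j) (hn0 j)) _
  have hArel : ∀ γ, (∏ j, (|m j| : ℝ) ^ γ j) = r γ * A γ := by
    intro γ
    rw [hr, hA, ← Finset.prod_mul_distrib]
    refine Finset.prod_congr rfl fun j _ => ?_
    rw [← mul_pow, div_mul_cancel₀ _ (ne_of_gt (hn0 j))]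
  have hrub : ∀ γ ∈ S, r γ ≤ (1 + δ) ^ K := by
    intro γ hγ
    calc r γ ≤ ∏ j, (1 + δ) ^ γ j := by
          refine Finset.prod_le_prod (fun j _ => by positivity) (fun j _ => ?_)
          refine pow_le_pow_left₀ (by positivity) ?_ _
          rw [div_le_iff₀ (hn0 j)]
          exact hub j
    _ = (1 + δ) ^ (∑ j, γ j) := Finset.prod_pow_eq_pow_sum _ _ _
    _ ≤ (1 + δ) ^ K := pow_le_pow_right₀ (by linarith) (Finset.le_sup hγ)
  have hrlb : ∀ γ ∈ S, (1 - δ) ^ K ≤ r γ := by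
    intro γ hγ
    calc (1 - δ) ^ K ≤ (1 - δ) ^ (∑ j, γ j) :=
          pow_le_pow_of_le_one (by linarith) (by linarith) (Finset.le_sup hγ)
    _ = ∏ j, (1 - δ) ^ γ j := (Finset.prod_pow_eq_pow_sum _ _ _).symm
    _ ≤ r γ := by
          refine Finset.prod_le_prod (fun j _ => pow_nonneg (by linarith) _) (fun j _ => ?_)
          refine pow_le_pow_left₀ (by linarith) ?_ _
          rw [le_div_iff₀ (hn0 j)]
          exact hlb j
  -- Q comparisons
  have hQn_eq : QS d S n = ∑ γ ∈ S, (A γ) ^ 2 := by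
    rw [QS]
    exact Finset.sum_congr rfl fun γ _ => by rw [abs_sigmaSym d γ n hnne]
  have hQm_eq : QS d S m = ∑ γ ∈ S, (r γ) ^ 2 * (A γ) ^ 2 := by
    rw [QS]
    refine Finset.sum_congr rfl fun γ _ => ?_
    rw [abs_sigmaSym d γ m hmne, hArel γ, mul_pow]
  have hQn1 : 1 ≤ QS d S n := by
    rw [hQn_eq]
    have h00 : A 0 ^ 2 = 1 := by
      rw [hA]; simp
    calc (1:ℝ) = A 0 ^ 2 := h00.symm
    _ ≤ ∑ γ ∈ S, (A γ) ^ 2 :=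
        Finset.single_le_sum (f := fun γ => A γ ^ 2) (fun γ _ => sq_nonneg _) h0
  have hQn_pos : 0 < QS d S n := by linarith
  have hQm_lb : ((1 - δ) ^ K) ^ 2 * QS d S n ≤ QS d S m := by
    rw [hQm_eq, hQn_eq, Finset.mul_sum]
    refine Finset.sum_le_sum fun γ hγ => ?_
    rw [← mul_pow, ← mul_pow]
    refine pow_le_pow_left₀ (mul_nonneg (pow_nonneg (by linarith) K) (hApos γ).le) ?_ _
    exact mul_le_mul_of_nonneg_right (hrlb γ hγ) (hApos γ).le
  have hQm_ub : QS d S m ≤ ((1 + δ) ^ K) ^ 2 * QS d S n := by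
    rw [hQm_eq, hQn_eq, Finset.mul_sum]
    refine Finset.sum_le_sum fun γ hγ => ?_
    rw [← mul_pow, ← mul_pow]
    refine pow_le_pow_left₀ (mul_nonneg (hrpos γ).le (hApos γ).le) ?_ _
    exact mul_le_mul_of_nonneg_right (hrub γ hγ) (hApos γ).le
  have hQm_pos : 0 < QS d S m :=
    lt_of_lt_of_le (mul_pos (pow_pos (pow_pos (by linarith) K) 2) hQn_pos) hQm_lb
  set sQn := Real.sqrt (QS d S n) with hsQn
  set sQm := Real.sqrt (QS d S m) with hsQm
  have hsQn_pos : 0 < sQn := Real.sqrt_pos.mpr hQn_pos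
  have hsQm_pos : 0 < sQm := Real.sqrt_pos.mpr hQm_pos
  have hsQn_sq : sQn ^ 2 = QS d S n := Real.sq_sqrt hQn_pos.le
  have hsm_lb : (1 - δ) ^ K * sQn ≤ sQm := by
    have h1 : Real.sqrt (((1 - δ) ^ K) ^ 2 * QS d S n) ≤ sQm := Real.sqrt_le_sqrt hQm_lb
    rwa [Real.sqrt_mul (sq_nonneg _), Real.sqrt_sq (pow_nonneg (by linarith) K)] at h1
  have hsm_ub : sQm ≤ (1 + δ) ^ K * sQn := by
    have h1 : sQm ≤ Real.sqrt (((1 + δ) ^ K) ^ 2 * QS d S n) := Real.sqrt_le_sqrt hQm_ub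
    rwa [Real.sqrt_mul (sq_nonneg _), Real.sqrt_sq (pow_nonneg (by linarith) K)] at h1
  have hc0K : c0 ^ K ≤ 1 + e := by
    calc c0 ^ K ≤ c0 ^ (K + 1) := pow_le_pow_right₀ hc0.le (Nat.le_succ K)
    _ = 1 + e := hc0pow
  have hpowδ : (1 + δ) ^ K = c0 ^ K * (1 - δ) ^ K := by
    rw [← mul_pow, ← h1δ]
  -- per-γ scalar bound
  have key : ∀ γ ∈ S, (r γ / sQm - 1 / sQn) ^ 2 ≤ e ^ 2 / QS d S n := by
    intro γ hγ
    set x := r γ * sQn / sQm with hx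
    have h2 : (0:ℝ) ≤ (1 - δ) ^ K * sQn :=
      mul_nonneg (pow_nonneg (by linarith) K) hsQn_pos.le
    have hx_ub : x ≤ 1 + e := by
      rw [hx, div_le_iff₀ hsQm_pos]
      calc r γ * sQn ≤ (1 + δ) ^ K * sQn :=
            mul_le_mul_of_nonneg_right (hrub γ hγ) hsQn_pos.le
      _ = c0 ^ K * ((1 - δ) ^ K * sQn) := by rw [hpowδ]; ring
      _ ≤ (1 + e) * sQm := mul_le_mul hc0K hsm_lb h2 (by linarith)
    have hx_lb : 1 - e ≤ x := by
      rw [hx, le_div_iff₀ hsQm_pos]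
      have h5 : (1 - e) * c0 ^ K ≤ 1 := by
        calc (1 - e) * c0 ^ K ≤ (1 - e) * (1 + e) := mul_le_mul_of_nonneg_left hc0K (by linarith)
        _ = 1 - e ^ 2 := by ring
        _ ≤ 1 := by nlinarith [sq_nonneg e]
      calc (1 - e) * sQm ≤ (1 - e) * ((1 + δ) ^ K * sQn) :=
            mul_le_mul_of_nonneg_left hsm_ub (by linarith)
      _ = ((1 - e) * c0 ^ K) * ((1 - δ) ^ K * sQn) := by rw [hpowδ]; ring
      _ ≤ 1 * ((1 - δ) ^ K * sQn) := mul_le_mul_of_nonneg_right h5 h2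
      _ = (1 - δ) ^ K * sQn := one_mul _
      _ ≤ r γ * sQn := mul_le_mul_of_nonneg_right (hrlb γ hγ) hsQn_pos.le
    have hxsq : (x - 1) ^ 2 ≤ e ^ 2 := by nlinarith
    have heq : r γ / sQm - 1 / sQn = (x - 1) / sQn := by
      rw [hx]; field_simp
    rw [heq, div_pow, hsQn_sq]
    exact (div_le_div_iff_of_pos_right hQn_pos).mpr hxsq
  have hσrel : ∀ γ ∈ S, sigmaSym d γ m / (sQm : ℂ) - sigmaSym d γ n / (sQn : ℂ)
      = (((r γ / sQm - 1 / sQn : ℝ)) : ℂ) * sigmaSym d γ n := by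
    intro γ hγ
    have hrγ : (∏ j, ((|m j| : ℝ) / (|n j| : ℝ)) ^ γ j) = r γ := rfl
    rw [sigma_ratio d γ m n hmne hnne hsign, hrγ, Complex.ofReal_sub,
      Complex.ofReal_div, Complex.ofReal_div, Complex.ofReal_one]
    ring
  have hsummand : ∀ γ ∈ S, ‖sigmaSym d γ m / (sQm : ℂ) -
      sigmaSym d γ n / (sQn : ℂ)‖ ^ 2 = (r γ / sQm - 1 / sQn) ^ 2 * (A γ) ^ 2 := by
    intro γ hγ
    have hAγ : (∏ j, (|n j| : ℝ) ^ γ j) = A γ := rfl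
    rw [hσrel γ hγ, norm_mul, Complex.norm_real, Real.norm_eq_abs, abs_sigmaSym d γ n hnne, hAγ, mul_pow, sq_abs]
  calc ∑ γ ∈ S, ‖sigmaSym d γ m / (sQm : ℂ) -
          sigmaSym d γ n / (sQn : ℂ)‖ ^ 2
      = ∑ γ ∈ S, (r γ / sQm - 1 / sQn) ^ 2 * (A γ) ^ 2 := Finset.sum_congr rfl hsummand
  _ ≤ ∑ γ ∈ S, (e ^ 2 / QS d S n) * (A γ) ^ 2 :=
      Finset.sum_le_sum fun γ hγ => mul_le_mul_of_nonneg_right (key γ hγ) (sq_nonneg _)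
  _ = (e ^ 2 / QS d S n) * ∑ γ ∈ S, (A γ) ^ 2 := by rw [Finset.mul_sum]
  _ = e ^ 2 := by rw [← hQn_eq, div_mul_cancel₀ _ (ne_of_gt hQn_pos)]
  _ < ε ^ 2 := by rw [he]; nlinarith
end
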